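/- There exists a positive integer s with s ≤ p^11 such that c(n + s) = c(n) for all n ∈ ℤ; in particular, the sequence c is periodic. -/
import Mathlib


theorem stmt8 (p : ℕ) [Fact p.Prime] (hodd : Odd p)
    (c : ℤ → ZMod p)
    (hneg : ∀ n : ℤ, c (-n) = - c n)
    (h0 : c 0 = 0) (h1 : c 1 = 0) (h2 : c 2 = 1)
    (hS8 : ∀ n : ℤ, c 4 * c (n + 4) * c (n - 4) =
      c 3 * c 5 * c (n + 3) * c (n - 3)
      + (c 4 ^ 3 - c 3 ^ 3 * c 5) * c (n + 2) * c (n - 2)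
      + c 3 ^ 2 * c 6 * c (n + 1) * c (n - 1)
      - c 4 * c 6 * c n ^ 2)
    (hS9 : ∀ n : ℤ, c 3 * c 5 * c (n + 5) * c (n - 4) =
      c 3 ^ 2 * c 6 * c (n + 4) * c (n - 3)
      + c 4 * (c 5 ^ 2 - c 3 ^ 2 * c 6) * c (n + 3) * c (n - 2)
      + c 3 * c 4 * c 7 * c (n + 2) * c (n - 1)
      - c 5 * c 7 * c (n + 1) * c n)
    (hS10 : ∀ n : ℤ, c 4 * c (n + 5) * c (n - 5) =
      c 4 * c 6 * c (n + 3) * c (n - 3)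
      + c 4 * (c 5 ^ 2 - c 3 ^ 2 * c 6) * c (n + 2) * c (n - 2)
      + (c 3 ^ 3 * c 7 - c 8) * c (n + 1) * c (n - 1)
      - c 3 * c 4 * c 7 * c n ^ 2)
    (hS11 : ∀ n : ℤ, c 3 * c 5 * c (n + 6) * c (n - 5) =
      c 3 * c 4 * c 7 * c (n + 4) * c (n - 3)
      + (c 5 ^ 2 * c 6 - c 3 * c 4 ^ 2 * c 7) * c (n + 3) * c (n - 2)
      + c 3 * (c 3 * c 4 * c 8 - c 9) * c (n + 2) * c (n - 1)
      - c 3 * c 5 * c 8 * c (n + 1) * c n)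
    (h3 : c 3 ≠ 0) (h4 : c 4 ≠ 0) (h5 : c 5 ≠ 0)
    (hfour : ∀ m : ℤ, c m ≠ 0 ∨ c (m + 1) ≠ 0 ∨ c (m + 2) ≠ 0 ∨ c (m + 3) ≠ 0)
    :
    ∃ s : ℕ, 0 < s ∧ s ≤ p ^ 11 ∧ ∀ n : ℤ, c (n + (s : ℤ)) = c n := by
  have fwd : ∀ s n : ℤ, (∀ i : ℤ, n - 5 ≤ i → i ≤ n + 5 → c (i + s) = c i) → c (n + 6 + s) = c (n + 6) := by
    intro s n hw
    rcases hfour (n - 5) with h | h | h | h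
    · have A := hS11 (n)
      have B := hS11 (n + s)
      rw [show (n + s + 6 : ℤ) = n + 6 + s by ring, show (n + s - 5 : ℤ) = n - 5 + s by ring, show (n + s + 4 : ℤ) = n + 4 + s by ring, show (n + s - 3 : ℤ) = n - 3 + s by ring, show (n + s + 3 : ℤ) = n + 3 + s by ring, show (n + s - 2 : ℤ) = n - 2 + s by ring, show (n + s + 2 : ℤ) = n + 2 + s by ring, show (n + s - 1 : ℤ) = n - 1 + s by ring, show (n + s + 1 : ℤ) = n + 1 + s by ring] at B
      rw [hw (n - 5) (by omega) (by omega), hw (n + 4) (by omega) (by omega), hw (n - 3) (by omega) (by omega), hw (n + 3) (by omega) (by omega), hw (n - 2) (by omega) (by omega), hw (n + 2) (by omega) (by omega), hw (n - 1) (by omega) (by omega), hw (n + 1) (by omega) (by omega), hw (n) (by omega) (by omega)] at B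
      have key : (c 3 * c 5 * c (n - 5)) * c (n + 6 + s) = (c 3 * c 5 * c (n - 5)) * c (n + 6) := by
        linear_combination B - A
      exact mul_left_cancel₀ (mul_ne_zero (mul_ne_zero h3 h5) h) key
    · rw [show (n - 5 + 1 : ℤ) = n - 4 by ring] at h
      have A := hS10 (n + 1)
      have B := hS10 (n + 1 + s)
      rw [show (n + 1 + 5 : ℤ) = n + 6 by ring, show (n + 1 - 5 : ℤ) = n - 4 by ring, show (n + 1 + 3 : ℤ) = n + 4 by ring, show (n + 1 - 3 : ℤ) = n - 2 by ring, show (n + 1 + 2 : ℤ) = n + 3 by ring, show (n + 1 - 2 : ℤ) = n - 1 by ring, show (n + 1 + 1 : ℤ) = n + 2 by ring, show (n + 1 - 1 : ℤ) = n by ring] at A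
      rw [show (n + 1 + s + 5 : ℤ) = n + 6 + s by ring, show (n + 1 + s - 5 : ℤ) = n - 4 + s by ring, show (n + 1 + s + 3 : ℤ) = n + 4 + s by ring, show (n + 1 + s - 3 : ℤ) = n - 2 + s by ring, show (n + 1 + s + 2 : ℤ) = n + 3 + s by ring, show (n + 1 + s - 2 : ℤ) = n - 1 + s by ring, show (n + 1 + s + 1 : ℤ) = n + 2 + s by ring, show (n + 1 + s - 1 : ℤ) = n + s by ring] at B
      rw [hw (n - 4) (by omega) (by omega), hw (n + 4) (by omega) (by omega), hw (n - 2) (by omega) (by omega), hw (n + 3) (by omega) (by omega), hw (n - 1) (by omega) (by omega), hw (n + 2) (by omega) (by omega), hw (n) (by omega) (by omega), hw (n + 1) (by omega) (by omega)] at B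
      have key : (c 4 * c (n - 4)) * c (n + 6 + s) = (c 4 * c (n - 4)) * c (n + 6) := by
        linear_combination B - A
      exact mul_left_cancel₀ (mul_ne_zero h4 h) key
    · rw [show (n - 5 + 2 : ℤ) = n - 3 by ring] at h
      have A := hS9 (n + 1)
      have B := hS9 (n + 1 + s)
      rw [show (n + 1 + 5 : ℤ) = n + 6 by ring, show (n + 1 - 4 : ℤ) = n - 3 by ring, show (n + 1 + 4 : ℤ) = n + 5 by ring, show (n + 1 - 3 : ℤ) = n - 2 by ring, show (n + 1 + 3 : ℤ) = n + 4 by ring, show (n + 1 - 2 : ℤ) = n - 1 by ring, show (n + 1 + 2 : ℤ) = n + 3 by ring, show (n + 1 - 1 : ℤ) = n by ring, show (n + 1 + 1 : ℤ) = n + 2 by ring] at A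
      rw [show (n + 1 + s + 5 : ℤ) = n + 6 + s by ring, show (n + 1 + s - 4 : ℤ) = n - 3 + s by ring, show (n + 1 + s + 4 : ℤ) = n + 5 + s by ring, show (n + 1 + s - 3 : ℤ) = n - 2 + s by ring, show (n + 1 + s + 3 : ℤ) = n + 4 + s by ring, show (n + 1 + s - 2 : ℤ) = n - 1 + s by ring, show (n + 1 + s + 2 : ℤ) = n + 3 + s by ring, show (n + 1 + s - 1 : ℤ) = n + s by ring, show (n + 1 + s + 1 : ℤ) = n + 2 + s by ring] at B
      rw [hw (n - 3) (by omega) (by omega), hw (n + 5) (by omega) (by omega), hw (n - 2) (by omega) (by omega), hw (n + 4) (by omega) (by omega), hw (n - 1) (by omega) (by omega), hw (n + 3) (by omega) (by omega), hw (n) (by omega) (by omega), hw (n + 2) (by omega) (by omega), hw (n + 1) (by omega) (by omega)] at B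
      have key : (c 3 * c 5 * c (n - 3)) * c (n + 6 + s) = (c 3 * c 5 * c (n - 3)) * c (n + 6) := by
        linear_combination B - A
      exact mul_left_cancel₀ (mul_ne_zero (mul_ne_zero h3 h5) h) key
    · rw [show (n - 5 + 3 : ℤ) = n - 2 by ring] at h
      have A := hS8 (n + 2)
      have B := hS8 (n + 2 + s)
      rw [show (n + 2 + 4 : ℤ) = n + 6 by ring, show (n + 2 - 4 : ℤ) = n - 2 by ring, show (n + 2 + 3 : ℤ) = n + 5 by ring, show (n + 2 - 3 : ℤ) = n - 1 by ring, show (n + 2 + 2 : ℤ) = n + 4 by ring, show (n + 2 - 2 : ℤ) = n by ring, show (n + 2 + 1 : ℤ) = n + 3 by ring, show (n + 2 - 1 : ℤ) = n + 1 by ring] at A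
      rw [show (n + 2 + s + 4 : ℤ) = n + 6 + s by ring, show (n + 2 + s - 4 : ℤ) = n - 2 + s by ring, show (n + 2 + s + 3 : ℤ) = n + 5 + s by ring, show (n + 2 + s - 3 : ℤ) = n - 1 + s by ring, show (n + 2 + s + 2 : ℤ) = n + 4 + s by ring, show (n + 2 + s - 2 : ℤ) = n + s by ring, show (n + 2 + s + 1 : ℤ) = n + 3 + s by ring, show (n + 2 + s - 1 : ℤ) = n + 1 + s by ring] at B
      rw [hw (n - 2) (by omega) (by omega), hw (n + 5) (by omega) (by omega), hw (n - 1) (by omega) (by omega), hw (n + 4) (by omega) (by omega), hw (n) (by omega) (by omega), hw (n + 3) (by omega) (by omega), hw (n + 1) (by omega) (by omega), hw (n + 2) (by omega) (by omega)] at B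
      have key : (c 4 * c (n - 2)) * c (n + 6 + s) = (c 4 * c (n - 2)) * c (n + 6) := by
        linear_combination B - A
      exact mul_left_cancel₀ (mul_ne_zero h4 h) key
  have bwd : ∀ s n : ℤ, (∀ i : ℤ, n - 5 ≤ i → i ≤ n + 5 → c (i + s) = c i) → c (n - 6 + s) = c (n - 6) := by
    intro s n hw
    rcases hfour (n + 2) with h | h | h | h
    · have A := hS8 (n - 2)
      have B := hS8 (n - 2 + s)
      rw [show (n - 2 + 4 : ℤ) = n + 2 by ring, show (n - 2 - 4 : ℤ) = n - 6 by ring, show (n - 2 + 3 : ℤ) = n + 1 by ring, show (n - 2 - 3 : ℤ) = n - 5 by ring, show (n - 2 + 2 : ℤ) = n by ring, show (n - 2 - 2 : ℤ) = n - 4 by ring, show (n - 2 + 1 : ℤ) = n - 1 by ring, show (n - 2 - 1 : ℤ) = n - 3 by ring] at A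
      rw [show (n - 2 + s + 4 : ℤ) = n + 2 + s by ring, show (n - 2 + s - 4 : ℤ) = n - 6 + s by ring, show (n - 2 + s + 3 : ℤ) = n + 1 + s by ring, show (n - 2 + s - 3 : ℤ) = n - 5 + s by ring, show (n - 2 + s + 2 : ℤ) = n + s by ring, show (n - 2 + s - 2 : ℤ) = n - 4 + s by ring, show (n - 2 + s + 1 : ℤ) = n - 1 + s by ring, show (n - 2 + s - 1 : ℤ) = n - 3 + s by ring] at B
      rw [hw (n + 2) (by omega) (by omega), hw (n + 1) (by omega) (by omega), hw (n - 5) (by omega) (by omega), hw (n) (by omega) (by omega), hw (n - 4) (by omega) (by omega), hw (n - 1) (by omega) (by omega), hw (n - 3) (by omega) (by omega), hw (n - 2) (by omega) (by omega)] at B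
      have key : (c 4 * c (n + 2)) * c (n - 6 + s) = (c 4 * c (n + 2)) * c (n - 6) := by
        linear_combination B - A
      exact mul_left_cancel₀ (mul_ne_zero h4 h) key
    · rw [show (n + 2 + 1 : ℤ) = n + 3 by ring] at h
      have A := hS9 (n - 2)
      have B := hS9 (n - 2 + s)
      rw [show (n - 2 + 5 : ℤ) = n + 3 by ring, show (n - 2 - 4 : ℤ) = n - 6 by ring, show (n - 2 + 4 : ℤ) = n + 2 by ring, show (n - 2 - 3 : ℤ) = n - 5 by ring, show (n - 2 + 3 : ℤ) = n + 1 by ring, show (n - 2 - 2 : ℤ) = n - 4 by ring, show (n - 2 + 2 : ℤ) = n by ring, show (n - 2 - 1 : ℤ) = n - 3 by ring, show (n - 2 + 1 : ℤ) = n - 1 by ring] at A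
      rw [show (n - 2 + s + 5 : ℤ) = n + 3 + s by ring, show (n - 2 + s - 4 : ℤ) = n - 6 + s by ring, show (n - 2 + s + 4 : ℤ) = n + 2 + s by ring, show (n - 2 + s - 3 : ℤ) = n - 5 + s by ring, show (n - 2 + s + 3 : ℤ) = n + 1 + s by ring, show (n - 2 + s - 2 : ℤ) = n - 4 + s by ring, show (n - 2 + s + 2 : ℤ) = n + s by ring, show (n - 2 + s - 1 : ℤ) = n - 3 + s by ring, show (n - 2 + s + 1 : ℤ) = n - 1 + s by ring] at B
      rw [hw (n + 3) (by omega) (by omega), hw (n + 2) (by omega) (by omega), hw (n - 5) (by omega) (by omega), hw (n + 1) (by omega) (by omega), hw (n - 4) (by omega) (by omega), hw (n) (by omega) (by omega), hw (n - 3) (by omega) (by omega), hw (n - 1) (by omega) (by omega), hw (n - 2) (by omega) (by omega)] at B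
      have key : (c 3 * c 5 * c (n + 3)) * c (n - 6 + s) = (c 3 * c 5 * c (n + 3)) * c (n - 6) := by
        linear_combination B - A
      exact mul_left_cancel₀ (mul_ne_zero (mul_ne_zero h3 h5) h) key
    · rw [show (n + 2 + 2 : ℤ) = n + 4 by ring] at h
      have A := hS10 (n - 1)
      have B := hS10 (n - 1 + s)
      rw [show (n - 1 + 5 : ℤ) = n + 4 by ring, show (n - 1 - 5 : ℤ) = n - 6 by ring, show (n - 1 + 3 : ℤ) = n + 2 by ring, show (n - 1 - 3 : ℤ) = n - 4 by ring, show (n - 1 + 2 : ℤ) = n + 1 by ring, show (n - 1 - 2 : ℤ) = n - 3 by ring, show (n - 1 + 1 : ℤ) = n by ring, show (n - 1 - 1 : ℤ) = n - 2 by ring] at A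
      rw [show (n - 1 + s + 5 : ℤ) = n + 4 + s by ring, show (n - 1 + s - 5 : ℤ) = n - 6 + s by ring, show (n - 1 + s + 3 : ℤ) = n + 2 + s by ring, show (n - 1 + s - 3 : ℤ) = n - 4 + s by ring, show (n - 1 + s + 2 : ℤ) = n + 1 + s by ring, show (n - 1 + s - 2 : ℤ) = n - 3 + s by ring, show (n - 1 + s + 1 : ℤ) = n + s by ring, show (n - 1 + s - 1 : ℤ) = n - 2 + s by ring] at B
      rw [hw (n + 4) (by omega) (by omega), hw (n + 2) (by omega) (by omega), hw (n - 4) (by omega) (by omega), hw (n + 1) (by omega) (by omega), hw (n - 3) (by omega) (by omega), hw (n) (by omega) (by omega), hw (n - 2) (by omega) (by omega), hw (n - 1) (by omega) (by omega)] at B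
      have key : (c 4 * c (n + 4)) * c (n - 6 + s) = (c 4 * c (n + 4)) * c (n - 6) := by
        linear_combination B - A
      exact mul_left_cancel₀ (mul_ne_zero h4 h) key
    · rw [show (n + 2 + 3 : ℤ) = n + 5 by ring] at h
      have A := hS11 (n - 1)
      have B := hS11 (n - 1 + s)
      rw [show (n - 1 + 6 : ℤ) = n + 5 by ring, show (n - 1 - 5 : ℤ) = n - 6 by ring, show (n - 1 + 4 : ℤ) = n + 3 by ring, show (n - 1 - 3 : ℤ) = n - 4 by ring, show (n - 1 + 3 : ℤ) = n + 2 by ring, show (n - 1 - 2 : ℤ) = n - 3 by ring, show (n - 1 + 2 : ℤ) = n + 1 by ring, show (n - 1 - 1 : ℤ) = n - 2 by ring, show (n - 1 + 1 : ℤ) = n by ring] at A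
      rw [show (n - 1 + s + 6 : ℤ) = n + 5 + s by ring, show (n - 1 + s - 5 : ℤ) = n - 6 + s by ring, show (n - 1 + s + 4 : ℤ) = n + 3 + s by ring, show (n - 1 + s - 3 : ℤ) = n - 4 + s by ring, show (n - 1 + s + 3 : ℤ) = n + 2 + s by ring, show (n - 1 + s - 2 : ℤ) = n - 3 + s by ring, show (n - 1 + s + 2 : ℤ) = n + 1 + s by ring, show (n - 1 + s - 1 : ℤ) = n - 2 + s by ring, show (n - 1 + s + 1 : ℤ) = n + s by ring] at B
      rw [hw (n + 5) (by omega) (by omega), hw (n + 3) (by omega) (by omega), hw (n - 4) (by omega) (by omega), hw (n + 2) (by omega) (by omega), hw (n - 3) (by omega) (by omega), hw (n + 1) (by omega) (by omega), hw (n - 2) (by omega) (by omega), hw (n) (by omega) (by omega), hw (n - 1) (by omega) (by omega)] at B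
      have key : (c 3 * c 5 * c (n + 5)) * c (n - 6 + s) = (c 3 * c 5 * c (n + 5)) * c (n - 6) := by
        linear_combination B - A
      exact mul_left_cancel₀ (mul_ne_zero (mul_ne_zero h3 h5) h) key
  haveI : NeZero p := ⟨(Fact.out : p.Prime).ne_zero⟩
  have key : ∀ a b : ℕ, a < b → b ≤ p ^ 11 →
      (∀ j : ℕ, j ≤ 10 → c ((a : ℤ) + j) = c ((b : ℤ) + j)) →
      ∃ s : ℕ, 0 < s ∧ s ≤ p ^ 11 ∧ ∀ n : ℤ, c (n + (s : ℤ)) = c n := by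
    intro a b hab hbp hwin
    refine ⟨b - a, by omega, by omega, ?_⟩
    set s : ℤ := ((b - a : ℕ) : ℤ) with hs
    have hsba : s = (b : ℤ) - (a : ℤ) := by omega
    have base : ∀ i : ℤ, (a : ℤ) ≤ i → i ≤ (a : ℤ) + 10 → c (i + s) = c i := by
      intro i hi1 hi2
      have hj : (((i - (a : ℤ)).toNat : ℤ)) = i - (a : ℤ) := Int.toNat_of_nonneg (by omega)
      have H := hwin (i - (a : ℤ)).toNat (by omega)
      rw [hj] at H
      rw [show (a : ℤ) + (i - (a : ℤ)) = i by ring,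
          show (b : ℤ) + (i - (a : ℤ)) = i + s by omega] at H
      exact H.symm
    have main : ∀ k : ℕ, ∀ i : ℤ, (a : ℤ) - k ≤ i → i ≤ (a : ℤ) + 10 + k → c (i + s) = c i := by
      intro k
      induction k with
      | zero =>
        intro i hi1 hi2
        exact base i (by omega) (by omega)
      | succ k ih =>
        intro i hi1 hi2
        rcases (show i = (a : ℤ) - k - 1 ∨ ((a : ℤ) - k ≤ i ∧ i ≤ (a : ℤ) + 10 + k) ∨
            i = (a : ℤ) + 11 + k by omega) with h | ⟨hA, hB⟩ | h
        · have H := bwd s ((a : ℤ) - k + 5) (fun j hj1 hj2 => ih j (by omega) (by omega))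
          rw [show i + s = ((a : ℤ) - k + 5) - 6 + s by omega,
              show i = ((a : ℤ) - k + 5) - 6 by omega]
          exact H
        · exact ih i hA hB
        · have H := fwd s ((a : ℤ) + 5 + k) (fun j hj1 hj2 => ih j (by omega) (by omega))
          rw [show i + s = ((a : ℤ) + 5 + k) + 6 + s by omega,
              show i = ((a : ℤ) + 5 + k) + 6 by omega]
          exact H
    intro n
    exact main (n - (a : ℤ)).natAbs n (by omega) (by omega)
  classical
  have hcard : (Finset.univ : Finset (Fin 11 → ZMod p)).card < (Finset.range (p ^ 11 + 1)).card := by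
    rw [Finset.card_range, Finset.card_univ, Fintype.card_fun, ZMod.card, Fintype.card_fin]
    omega
  obtain ⟨x, hx, y, hy, hxy, hgxy⟩ :=
    Finset.exists_ne_map_eq_of_card_lt_of_maps_to (s := Finset.range (p ^ 11 + 1))
      (t := (Finset.univ : Finset (Fin 11 → ZMod p))) hcard
      (f := fun k : ℕ => fun i : Fin 11 => c (((k + i.val : ℕ) : ℤ)))
      (fun n _ => Finset.mem_univ _)
  have hwin : ∀ u v : ℕ, (fun i : Fin 11 => c (((u + i.val : ℕ) : ℤ))) =
      (fun i : Fin 11 => c (((v + i.val : ℕ) : ℤ))) →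
      ∀ j : ℕ, j ≤ 10 → c ((u : ℤ) + j) = c ((v : ℤ) + j) := by
    intro u v huv j hj
    have H := congrFun huv ⟨j, by omega⟩
    simp only at H
    push_cast at H
    exact H
  rcases lt_or_gt_of_ne hxy with h | h
  · exact key x y h (by have := Finset.mem_range.mp hy; omega) (hwin x y hgxy)
  · exact key y x h (by have := Finset.mem_range.mp hx; omega) (hwin y x hgxy.symm)
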